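/- Under the assumptions p ∈ (0,1), v > 0, δ ∈ (0,1), c continuous strictly increasing with c(j) → ∞ as j → 1 and pv > c(0): no strategy that searches positive-measure sets in periods 1,...,T and then stops forever can be optimal; in particular, for any finite T and any increasing sequence 0 = l_0 < l_1 < ... < l_T < 1 satisfying the last-period optimality condition pv/((1−l_{T-1})p+(1−p)) = c(l_T), there exists l_{T+1} > l_T such that appending one more period of search strictly increases total expected discounted payoff. -/
import Mathlib


/-- No strategy that searches for `T` periods and then stops can be optimal:
given the last-period optimality condition, there is `l_{T+1} > l_T` such that
appending one more period of search strictly increases the total expected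
discounted payoff (the added term, discounted and weighted by the survival
probability `1 − p l_T`, is strictly positive). -/
theorem never_stop (p v δ : ℝ) (hp : p ∈ Set.Ioo (0:ℝ) 1) (hv : 0 < v)
    (hδ : δ ∈ Set.Ioo (0:ℝ) 1)
    (c : ℝ → ℝ)
    (hc_cont : ContinuousOn c (Set.Ico (0:ℝ) 1))
    (hc_mono : StrictMonoOn c (Set.Ico (0:ℝ) 1))
    (hc_lim : Filter.Tendsto c (nhdsWithin 1 (Set.Iio 1)) Filter.atTop)
    (hstart : p * v > c 0)
    (T : ℕ) (hT : 1 ≤ T) (l : ℕ → ℝ) (hl0 : l 0 = 0)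
    (hincr : ∀ t < T, l t < l (t + 1)) (hlT : l T < 1)
    (hfoc : p * v / ((1 - l (T - 1)) * p + (1 - p)) = c (l T)) :
    ∃ lnext ∈ Set.Ioo (l T) 1,
      0 < δ ^ T * (1 - p * l T) *
        ((lnext - l T) * p * v / ((1 - l T) * p + (1 - p)) -
          ∫ j in (l T)..lnext, c j) := by
  obtain ⟨hp0, hp1⟩ := hp
  obtain ⟨hδ0, hδ1⟩ := hδ
  set a := l T with ha_def
  -- monotonicity: l is increasing up to T
  have hmono : ∀ t ≤ T, l 0 ≤ l t := by
    intro t ht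
    induction t with
    | zero => exact le_rfl
    | succ n ih =>
      have h1 : l 0 ≤ l n := ih (by omega)
      exact h1.trans (le_of_lt (hincr n (by omega)))
  have ha0 : 0 ≤ a := by
    have := hmono T le_rfl
    rw [hl0] at this
    exact this
  have hprev : l (T - 1) < a := by
    have h := hincr (T - 1) (by omega)
    have : T - 1 + 1 = T := by omega
    rwa [this] at h
  have hprev0 : 0 ≤ l (T - 1) := by
    have := hmono (T - 1) (by omega)
    rw [hl0] at this
    exact this
  set D : ℝ := (1 - a) * p + (1 - p) with hD_def
  have hD0 : 0 < D := by
    have h1 : 0 < (1 - a) * p := mul_pos (by linarith) hp0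
    have h2 : 0 < 1 - p := by linarith
    linarith
  set K : ℝ := p * v / D with hK_def
  have hKpos : 0 < K := div_pos (mul_pos hp0 hv) hD0
  -- c a < K
  have hcaK : c a < K := by
    rw [← hfoc]
    apply div_lt_div_of_pos_left (mul_pos hp0 hv) hD0
    have : (1 - a) * p < (1 - l (T - 1)) * p := by
      apply mul_lt_mul_of_pos_right _ hp0
      linarith
    linarith
  set M : ℝ := (c a + K) / 2 with hM_def
  have hcaM : c a < M := by simp only [hM_def]; linarith
  have hMK : M < K := by simp only [hM_def]; linarith
  -- continuity of c at a within Ico 0 1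
  have hmem : a ∈ Set.Ico (0:ℝ) 1 := ⟨ha0, hlT⟩
  have hcw : ContinuousWithinAt c (Set.Ico (0:ℝ) 1) a := hc_cont a hmem
  rw [Metric.continuousWithinAt_iff] at hcw
  obtain ⟨η, hη0, hη⟩ := hcw (M - c a) (by linarith)
  set b : ℝ := min (a + η / 2) ((a + 1) / 2) with hb_def
  have hab : a < b := by
    apply lt_min <;> linarith
  have hb1 : b < 1 := by
    have : b ≤ (a + 1) / 2 := min_le_right _ _
    linarith
  refine ⟨b, ⟨hab, hb1⟩, ?_⟩
  -- pointwise bound on [a, b]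
  have hbound : ∀ j ∈ Set.Icc a b, c j < M := by
    intro j ⟨hja, hjb⟩
    have hj1 : j < 1 := lt_of_le_of_lt hjb hb1
    have hj0 : 0 ≤ j := le_trans ha0 hja
    have hdist : dist j a < η := by
      rw [Real.dist_eq, abs_of_nonneg (by linarith)]
      have : b ≤ a + η / 2 := min_le_left _ _
      linarith
    have := hη ⟨hj0, hj1⟩ hdist
    rw [Real.dist_eq] at this
    have := abs_lt.mp this
    linarith [this.1, this.2]
  -- integrability
  have hsub : Set.uIcc a b ⊆ Set.Ico (0:ℝ) 1 := by
    rw [Set.uIcc_of_le (le_of_lt hab)]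
    intro x ⟨hx1, hx2⟩
    exact ⟨le_trans ha0 hx1, lt_of_le_of_lt hx2 hb1⟩
  have hint : IntervalIntegrable c MeasureTheory.volume a b :=
    (hc_cont.mono hsub).intervalIntegrable
  have hintM : IntervalIntegrable (fun _ => M) MeasureTheory.volume a b :=
    intervalIntegrable_const
  have hIle : (∫ j in a..b, c j) ≤ (b - a) * M := by
    have h := intervalIntegral.integral_mono_on (le_of_lt hab) hint hintM
      (fun x hx => le_of_lt (hbound x hx))
    rwa [intervalIntegral.integral_const, smul_eq_mul] at h
  have hmain : 0 < (b - a) * p * v / D - ∫ j in a..b, c j := by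
    have h1 : (b - a) * p * v / D = (b - a) * K := by
      rw [hK_def]; ring
    rw [h1]
    have h2 : (b - a) * M < (b - a) * K :=
      mul_lt_mul_of_pos_left hMK (by linarith)
    linarith
  have hpa : p * a < 1 := by
    have : p * a ≤ 1 * a := mul_le_mul_of_nonneg_right (le_of_lt hp1) ha0
    linarith
  have hpos1 : 0 < δ ^ T * (1 - p * a) :=
    mul_pos (pow_pos hδ0 T) (by linarith)
  exact mul_pos hpos1 hmain
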